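/- For all vectors v₁, v₂, v₃, v₄, v₅, v₆ ∈ ℝ³, the compound determinant Y := det(v₆×v₁, v₂×v₃, v₄×v₅) satisfies Y = Δ₁₄₅·Δ₂₃₆ − Δ₁₂₃·Δ₄₅₆, and moreover Y = Δ₁₄₆·Δ₂₃₅ − Δ₁₅₆·Δ₂₃₄ and Y = Δ₁₃₆·Δ₂₄₅ − Δ₁₂₆·Δ₃₄₅. (These are Scott's three quadratic-difference expressions for the Gr(3,6) cluster variable Y.) -/
import Mathlib


/-- Determinant of the 3×3 real matrix with columns `a`, `b`, `c`. -/
noncomputable def det3 (a b c : Fin 3 → ℝ) : ℝ :=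
  (Matrix.of ![a, b, c]).transpose.det

/-- The standard cross product on `ℝ³`. -/
def cross (a b : Fin 3 → ℝ) : Fin 3 → ℝ := crossProduct a b

/-- Scott's three quadratic-difference expressions for the Gr(3,6) cluster variable
`Y = det(v₆×v₁, v₂×v₃, v₄×v₅)`. -/
theorem scott_Y_quadratic_differences (v₁ v₂ v₃ v₄ v₅ v₆ : Fin 3 → ℝ) :
    det3 (cross v₆ v₁) (cross v₂ v₃) (cross v₄ v₅)
      = det3 v₁ v₄ v₅ * det3 v₂ v₃ v₆ - det3 v₁ v₂ v₃ * det3 v₄ v₅ v₆ ∧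
    det3 (cross v₆ v₁) (cross v₂ v₃) (cross v₄ v₅)
      = det3 v₁ v₄ v₆ * det3 v₂ v₃ v₅ - det3 v₁ v₅ v₆ * det3 v₂ v₃ v₄ ∧
    det3 (cross v₆ v₁) (cross v₂ v₃) (cross v₄ v₅)
      = det3 v₁ v₃ v₆ * det3 v₂ v₄ v₅ - det3 v₁ v₂ v₆ * det3 v₃ v₄ v₅ := by
  refine ⟨?_, ?_, ?_⟩ <;>
  · simp only [det3, cross, crossProduct, Matrix.det_fin_three, Matrix.transpose_apply,
      Matrix.of_apply, Matrix.cons_val', Matrix.cons_val_zero, Matrix.cons_val_one,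
      Matrix.head_cons, Matrix.empty_val', Matrix.cons_val_fin_one, Matrix.head_fin_const,
      Matrix.cons_val_two, Matrix.tail_cons, LinearMap.mk₂_apply, Pi.sub_apply, Pi.mul_apply]
    ring
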